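/- arXiv:2308.02364 — 2 statements merged into one kernel-verified Lean document; each statement's English description precedes it below -/
import Mathlib

section
/- Let Ω ∈ {0,1}^{N×T} be an observation pattern in which every entry is observed except for ϑ entries, all located in a single fixed column t₀ (rows indexed by a set Q with |Q| = ϑ). Let P_Ω(E) = Ω ∘ E (entrywise product) and let P_T be the tangent space projection associated with incoherent orthonormal U ∈ ℝ^{N×r}, V ∈ ℝ^{T×r} (‖Uᵀe_i‖² ≤ μr/N, ‖Vᵀe_t‖² ≤ μr/T). Then the operator norm of P_T ∘ P_Ω ∘ P_T - P_T on (ℝ^{N×T}, Frobenius inner product) is at most 2 ϑ μ r / min(N, T). -/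
open Matrix

/-- The tangent-space projection `P_T(E) = U Uᵀ E + E V Vᵀ - U Uᵀ E V Vᵀ`. -/
def PT {N T r : ℕ} (U : Matrix (Fin N) (Fin r) ℝ) (V : Matrix (Fin T) (Fin r) ℝ)
    (E : Matrix (Fin N) (Fin T) ℝ) : Matrix (Fin N) (Fin T) ℝ :=
  U * Uᵀ * E + E * (V * Vᵀ) - U * Uᵀ * E * (V * Vᵀ)

/-- The entrywise masking operator `P_Ω(E) = Ω ∘ E`. -/
def POmega {N T : ℕ} (Ω E : Matrix (Fin N) (Fin T) ℝ) : Matrix (Fin N) (Fin T) ℝ :=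
  Matrix.of fun i t => Ω i t * E i t

/-- The Frobenius inner product `⟨A, B⟩ = trace(Aᵀ B)`. -/
def frobInner {N T : ℕ} (A B : Matrix (Fin N) (Fin T) ℝ) : ℝ :=
  (Aᵀ * B).trace

/-- The Frobenius norm. -/
noncomputable def frobNorm {N T : ℕ} (A : Matrix (Fin N) (Fin T) ℝ) : ℝ :=
  Real.sqrt (frobInner A A)

section Stmt9Aux

noncomputable def toE {N T : ℕ} (A : Matrix (Fin N) (Fin T) ℝ) :
    EuclideanSpace ℝ (Fin N × Fin T) := WithLp.toLp 2 (fun p : Fin N × Fin T => A p.1 p.2)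

variable {N T r : ℕ}

lemma frobInner_eq (A B : Matrix (Fin N) (Fin T) ℝ) :
    frobInner A B = ∑ p : Fin N × Fin T, A p.1 p.2 * B p.1 p.2 := by
  simp only [frobInner, Matrix.trace, Matrix.diag_apply, Matrix.mul_apply,
    Matrix.transpose_apply, Fintype.sum_prod_type]
  exact Finset.sum_comm

lemma frobInner_inner (A B : Matrix (Fin N) (Fin T) ℝ) :
    frobInner A B = inner ℝ (toE A) (toE B) := by
  rw [frobInner_eq]
  simp [toE, PiLp.inner_apply, RCLike.inner_apply, conj_trivial, mul_comm]

lemma frobNorm_eq (A : Matrix (Fin N) (Fin T) ℝ) : frobNorm A = ‖toE A‖ := by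
  rw [frobNorm, frobInner_inner, real_inner_self_eq_norm_sq, Real.sqrt_sq (norm_nonneg _)]

lemma toE_neg (A : Matrix (Fin N) (Fin T) ℝ) : toE (-A) = -toE A := rfl

lemma toE_smul (c : ℝ) (A : Matrix (Fin N) (Fin T) ℝ) : toE (c • A) = c • toE A := rfl

noncomputable def toL : Matrix (Fin N) (Fin T) ℝ →ₗ[ℝ] EuclideanSpace ℝ (Fin N × Fin T) where
  toFun := toE
  map_add' _ _ := rfl
  map_smul' _ _ := rfl

lemma toE_sum {ι : Type*} (s : Finset ι) (f : ι → Matrix (Fin N) (Fin T) ℝ) :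
    toE (∑ i ∈ s, f i) = ∑ i ∈ s, toE (f i) := by
  exact (map_sum (toL (N := N) (T := T)) f s)

variable {U : Matrix (Fin N) (Fin r) ℝ} {V : Matrix (Fin T) (Fin r) ℝ}

lemma PT_sub (X Y : Matrix (Fin N) (Fin T) ℝ) :
    PT U V (X - Y) = PT U V X - PT U V Y := by
  simp only [PT, Matrix.mul_sub, Matrix.sub_mul]
  abel

lemma PT_smul (c : ℝ) (X : Matrix (Fin N) (Fin T) ℝ) :
    PT U V (c • X) = c • PT U V X := by
  simp only [PT, Matrix.mul_smul, Matrix.smul_mul, smul_sub, smul_add]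

lemma PT_sum {ι : Type*} (s : Finset ι) (f : ι → Matrix (Fin N) (Fin T) ℝ) :
    PT U V (∑ i ∈ s, f i) = ∑ i ∈ s, PT U V (f i) := by
  simp only [PT, Matrix.mul_sum, Matrix.sum_mul]
  rw [← Finset.sum_add_distrib, ← Finset.sum_sub_distrib]

lemma PT_idem (hU : Uᵀ * U = 1) (hV : Vᵀ * V = 1) (A : Matrix (Fin N) (Fin T) ℝ) :
    PT U V (PT U V A) = PT U V A := by
  have hP : U * Uᵀ * (U * Uᵀ) = U * Uᵀ := by
    rw [Matrix.mul_assoc, ← Matrix.mul_assoc Uᵀ U Uᵀ, hU, Matrix.one_mul]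
  have hW : ∀ X : Matrix (Fin N) (Fin T) ℝ, X * V * Vᵀ * V * Vᵀ = X * V * Vᵀ := by
    intro X
    rw [Matrix.mul_assoc (X * V) Vᵀ V, hV, Matrix.mul_one]
  simp only [PT, Matrix.mul_add, Matrix.add_mul, Matrix.mul_sub, Matrix.sub_mul,
    ← Matrix.mul_assoc, hP, hW]
  abel

lemma frobInner_PT_left (X Y : Matrix (Fin N) (Fin T) ℝ) :
    frobInner (PT U V X) Y = frobInner X (PT U V Y) := by
  have hPt : (U * Uᵀ)ᵀ = U * Uᵀ := by rw [Matrix.transpose_mul, Matrix.transpose_transpose]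
  have hWt : (V * Vᵀ)ᵀ = V * Vᵀ := by rw [Matrix.transpose_mul, Matrix.transpose_transpose]
  have tr1 : ((U * Uᵀ * X)ᵀ * Y).trace = (Xᵀ * (U * Uᵀ * Y)).trace := by
    rw [Matrix.transpose_mul, hPt, Matrix.mul_assoc]
  have tr2 : ((X * (V * Vᵀ))ᵀ * Y).trace = (Xᵀ * (Y * (V * Vᵀ))).trace := by
    rw [Matrix.transpose_mul, hWt, Matrix.mul_assoc, Matrix.trace_mul_comm,
      Matrix.mul_assoc]
  have tr3 : ((U * Uᵀ * X * (V * Vᵀ))ᵀ * Y).trace = (Xᵀ * (U * Uᵀ * Y * (V * Vᵀ))).trace := by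
    rw [Matrix.transpose_mul, hWt, Matrix.transpose_mul, hPt,
      Matrix.mul_assoc (V * Vᵀ), Matrix.trace_mul_comm]
    simp only [Matrix.mul_assoc]
  simp only [PT, frobInner, Matrix.transpose_add, Matrix.transpose_sub,
    Matrix.add_mul, Matrix.sub_mul, Matrix.mul_add, Matrix.mul_sub,
    Matrix.trace_add, Matrix.trace_sub, tr1, tr2, tr3]

lemma frobInner_single (i : Fin N) (t : Fin T) (X : Matrix (Fin N) (Fin T) ℝ) :
    frobInner (Matrix.single i t 1) X = X i t := by
  rw [frobInner_eq, Fintype.sum_prod_type]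
  simp [Matrix.single, ite_and, Finset.sum_ite_eq]

lemma PT_single_apply (i : Fin N) (t : Fin T) :
    (PT U V (Matrix.single i t 1)) i t =
      (U * Uᵀ) i i + (V * Vᵀ) t t - (U * Uᵀ) i i * (V * Vᵀ) t t := by
  have h1 : (U * Uᵀ * Matrix.single i t (1 : ℝ)) i t = (U * Uᵀ) i i := by
    rw [Matrix.mul_apply]
    simp [Matrix.single, ite_and, Finset.sum_ite_eq]
  have h2 : (Matrix.single i t (1 : ℝ) * (V * Vᵀ)) i t = (V * Vᵀ) t t := by
    rw [Matrix.mul_apply]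
    simp [Matrix.single, ite_and, Finset.sum_ite_eq]
  have h3 : (U * Uᵀ * Matrix.single i t (1 : ℝ) * (V * Vᵀ)) i t
      = (U * Uᵀ) i i * (V * Vᵀ) t t := by
    rw [Matrix.mul_apply]
    simp [Matrix.mul_apply, Matrix.single, ite_and, Finset.sum_ite_eq,
      Finset.mul_sum, Finset.sum_mul]
  simp [PT, h1, h2, h3]

lemma frobNorm_neg (A : Matrix (Fin N) (Fin T) ℝ) : frobNorm (-A) = frobNorm A := by
  rw [frobNorm_eq, frobNorm_eq, toE_neg, norm_neg]

lemma frobNorm_nonneg (A : Matrix (Fin N) (Fin T) ℝ) : 0 ≤ frobNorm A := by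
  rw [frobNorm_eq]; exact norm_nonneg _

end Stmt9Aux

/-- Key injectivity lemma: if all entries are observed except `ϑ` entries located in a
single column `t₀`, then the operator norm (w.r.t. the Frobenius norm) of
`P_T ∘ P_Ω ∘ P_T - P_T` is at most `2 ϑ μ r / min(N, T)`, i.e.
`‖(P_T P_Ω P_T - P_T)(A)‖_F ≤ (2 ϑ μ r / min(N, T)) ‖A‖_F` for every `A`. -/
theorem stmt9 (N T r : ℕ) (μ : ℝ) (hμ : 1 ≤ μ)
    (U : Matrix (Fin N) (Fin r) ℝ) (V : Matrix (Fin T) (Fin r) ℝ)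
    (hU : Uᵀ * U = 1) (hV : Vᵀ * V = 1)
    (hUinc : ∀ i, ∑ k, U i k ^ 2 ≤ μ * r / N)
    (hVinc : ∀ t, ∑ k, V t k ^ 2 ≤ μ * r / T)
    (Q : Finset (Fin N)) (ϑ : ℕ) (hQ : Q.card = ϑ) (t₀ : Fin T)
    (Ω : Matrix (Fin N) (Fin T) ℝ)
    (hΩ : ∀ i t, Ω i t = if i ∈ Q ∧ t = t₀ then 0 else 1) :
    ∀ A : Matrix (Fin N) (Fin T) ℝ,
      frobNorm (PT U V (POmega Ω (PT U V A)) - PT U V A) ≤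
        (2 * ϑ * μ * r / min (N : ℝ) (T : ℝ)) * frobNorm A := by
  intro A
  have hT0 : (0 : ℝ) < T := by exact_mod_cast t₀.pos
  set K : ℝ := 2 * μ * r / min (N : ℝ) (T : ℝ) with hK
  set B := PT U V A with hBdef
  set c : Fin N → ℝ := fun i => B i t₀ with hc
  set Ei : Fin N → Matrix (Fin N) (Fin T) ℝ := fun i => Matrix.single i t₀ (1 : ℝ)
    with hEi
  have hD : POmega Ω B = B - ∑ i ∈ Q, c i • Ei i := by
    funext a b
    simp only [POmega, Matrix.of_apply, hΩ, Matrix.sub_apply, Matrix.sum_apply,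
      Matrix.smul_apply, hEi, Matrix.single, smul_eq_mul, mul_ite, mul_one, mul_zero]
    by_cases hb : b = t₀
    · subst hb
      simp only [and_true, eq_self_iff_true, if_true]
      by_cases ha : a ∈ Q
      · simp [ha, Finset.sum_ite_eq', hc]
      · simp [ha, Finset.sum_ite_eq', hc]
    · simp only [Ne.symm hb, and_false, if_false]
      simp [Ne.symm hb]
      exact fun _ h => absurd h hb
  have hid : PT U V B = B := PT_idem hU hV A
  have h0 : PT U V (POmega Ω B) - B = -(∑ i ∈ Q, c i • PT U V (Ei i)) := by
    rw [hD, PT_sub, hid, PT_sum]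
    simp only [PT_smul]
    abel
  rw [h0, frobNorm_neg, frobNorm_eq, toE_sum]
  have hAn : 0 ≤ frobNorm A := frobNorm_nonneg A
  have step : ∀ i ∈ Q, ‖toE (c i • PT U V (Ei i))‖ ≤ K * frobNorm A := by
    intro i hi
    have hN0 : (0 : ℝ) < N := by exact_mod_cast i.pos
    have hmin : (0 : ℝ) < min (N : ℝ) T := lt_min hN0 hT0
    have hμr : (0 : ℝ) ≤ μ * r := by positivity
    have hp : (U * Uᵀ) i i = ∑ k, U i k ^ 2 := by simp [Matrix.mul_apply, sq]
    have hq : (V * Vᵀ) t₀ t₀ = ∑ k, V t₀ k ^ 2 := by simp [Matrix.mul_apply, sq]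
    have hp0 : 0 ≤ (U * Uᵀ) i i := by
      rw [hp]; exact Finset.sum_nonneg fun k _ => sq_nonneg _
    have hq0 : 0 ≤ (V * Vᵀ) t₀ t₀ := by
      rw [hq]; exact Finset.sum_nonneg fun k _ => sq_nonneg _
    have hdivN : μ * r / (N : ℝ) ≤ μ * r / min (N : ℝ) T := by
      gcongr
      exact min_le_left _ _
    have hdivT : μ * r / (T : ℝ) ≤ μ * r / min (N : ℝ) T := by
      gcongr
      exact min_le_right _ _
    have hpB : (U * Uᵀ) i i ≤ μ * r / min (N : ℝ) T := by
      rw [hp]; exact (hUinc i).trans hdivN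
    have hqB : (V * Vᵀ) t₀ t₀ ≤ μ * r / min (N : ℝ) T := by
      rw [hq]; exact (hVinc t₀).trans hdivT
    have hs2 : ‖toE (PT U V (Ei i))‖ ^ 2 ≤ K := by
      have e1 : ‖toE (PT U V (Ei i))‖ ^ 2 = frobInner (PT U V (Ei i)) (PT U V (Ei i)) := by
        rw [frobInner_inner, real_inner_self_eq_norm_sq]
      rw [e1, frobInner_PT_left, PT_idem hU hV, hEi, frobInner_single, PT_single_apply]
      have : (U * Uᵀ) i i + (V * Vᵀ) t₀ t₀ - (U * Uᵀ) i i * (V * Vᵀ) t₀ t₀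
          ≤ (U * Uᵀ) i i + (V * Vᵀ) t₀ t₀ := by nlinarith
      refine this.trans ?_
      rw [hK]
      calc (U * Uᵀ) i i + (V * Vᵀ) t₀ t₀ ≤ μ * r / min (N : ℝ) T + μ * r / min (N : ℝ) T :=
            add_le_add hpB hqB
        _ = 2 * μ * r / min (N : ℝ) T := by ring
    have hcieq : frobInner (PT U V (Ei i)) A = c i := by
      rw [frobInner_PT_left, hEi, frobInner_single]
    have hci : |c i| ≤ ‖toE (PT U V (Ei i))‖ * frobNorm A := by
      rw [← hcieq, frobInner_inner, frobNorm_eq]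
      exact abs_real_inner_le_norm _ _
    rw [toE_smul, norm_smul, Real.norm_eq_abs]
    calc |c i| * ‖toE (PT U V (Ei i))‖
        ≤ ‖toE (PT U V (Ei i))‖ * frobNorm A * ‖toE (PT U V (Ei i))‖ :=
          mul_le_mul_of_nonneg_right hci (norm_nonneg _)
      _ = ‖toE (PT U V (Ei i))‖ ^ 2 * frobNorm A := by ring
      _ ≤ K * frobNorm A := mul_le_mul_of_nonneg_right hs2 hAn
  calc ‖∑ i ∈ Q, toE (c i • PT U V (Ei i))‖
      ≤ ∑ i ∈ Q, ‖toE (c i • PT U V (Ei i))‖ := norm_sum_le _ _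
    _ ≤ ∑ _i ∈ Q, K * frobNorm A := Finset.sum_le_sum step
    _ = (Q.card : ℝ) * (K * frobNorm A) := by rw [Finset.sum_const, nsmul_eq_mul]
    _ = 2 * ϑ * μ * r / min (N : ℝ) (T : ℝ) * frobNorm A := by
        rw [hQ, hK]; ring
end

section
/- Let M be an N × T rank-r matrix with SVD M = U D Vᵀ, rows u_iᵀ of U and v_tᵀ of V, condition number κ = ψ₁(D)/ψ_r(D). Let M₀ = (m_{it})_{i ≤ N₀, t ≤ T₀} be the submatrix on the first N₀ rows and T₀ columns. Suppose there exist constants 0 < c ≤ C with c I_r ⪯ (N/N₀) ∑_{i ≤ N₀} u_i u_iᵀ ⪯ C I_r and c I_r ⪯ (T/T₀) ∑_{t ≤ T₀} v_t v_tᵀ ⪯ C I_r. Then the largest singular value of M₀ satisfies ψ₁(M₀) ≤ C ψ₁(M) √(N₀T₀/(NT)) and the smallest nonzero singular value satisfies ψ_r(M₀) ≥ c ψ_r(M) √(N₀T₀/(NT)); in particular M₀ has rank r and condition number κ₀ ≤ (C/c) κ. -/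
open Matrix

/-- The singular values of `A` (square roots of the eigenvalues of `Aᴴ A`),
listed in decreasing order. -/
noncomputable def svalList {N T : ℕ} (A : Matrix (Fin N) (Fin T) ℝ) : List ℝ :=
  ((Multiset.map
      (fun k => Real.sqrt ((Matrix.isHermitian_conjTranspose_mul_self A).eigenvalues k))
      (Finset.univ.val : Multiset (Fin T))).sort (· ≤ ·)).reverse

/-- `sval A k` is the `(k+1)`-st largest singular value of `A` (so `sval A 0 = ψ₁(A)`). -/
noncomputable def sval {N T : ℕ} (A : Matrix (Fin N) (Fin T) ℝ) (k : ℕ) : ℝ :=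
  (svalList A).getD k 0

/-! ### Auxiliary list lemmas -/

lemma auxGetDLe {b : ℝ} (hb : 0 ≤ b) :
    ∀ (l : List ℝ), l.Pairwise (· ≥ ·) → ∀ j : ℕ,
      l.countP (fun x => decide (b < x)) ≤ j → l.getD j 0 ≤ b := by
  intro l
  induction l with
  | nil => intro _ j _; simp [hb]
  | cons x xs ih =>
    intro h j hc
    rw [List.pairwise_cons] at h
    match j with
    | 0 =>
      by_contra hx
      push_neg at hx
      simp only [List.getD_cons_zero] at hx
      rw [List.countP_cons] at hc
      simp [hx] at hc
    | (j+1) =>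
      simp only [List.getD_cons_succ]
      apply ih h.2
      by_cases hbx : b < x
      · rw [List.countP_cons] at hc
        simp [hbx] at hc
        omega
      · push_neg at hbx
        have : xs.countP (fun x => decide (b < x)) = 0 := by
          rw [List.countP_eq_zero]
          intro a ha
          simpa using not_lt.2 ((h.1 a ha).trans hbx)
        omega

lemma auxLeGetD {a : ℝ} :
    ∀ (l : List ℝ), l.Pairwise (· ≥ ·) → ∀ j : ℕ,
      j + 1 ≤ l.countP (fun x => decide (a ≤ x)) → a ≤ l.getD j 0 := by
  intro l
  induction l with
  | nil => intro _ j hc; simp at hc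
  | cons x xs ih =>
    intro h j hc
    rw [List.pairwise_cons] at h
    match j with
    | 0 =>
      simp only [List.getD_cons_zero]
      by_contra hx
      push_neg at hx
      rw [List.countP_cons] at hc
      have h1 : xs.countP (fun y => decide (a ≤ y)) = 0 := by
        rw [List.countP_eq_zero]
        intro y hy
        simpa using not_le.2 (lt_of_le_of_lt (h.1 y hy) hx)
      simp [not_le.2 hx, h1] at hc
    | (j+1) =>
      simp only [List.getD_cons_succ]
      apply ih h.2
      rw [List.countP_cons] at hc
      have : (if decide (a ≤ x) = true then 1 else 0) ≤ 1 := by split <;> simp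
      omega

/-! ### svalList basics -/

lemma svalList_sorted {N T : ℕ} (A : Matrix (Fin N) (Fin T) ℝ) :
    (svalList A).Pairwise (· ≥ ·) := by
  have h := Multiset.pairwise_sort (Multiset.map
      (fun k => Real.sqrt ((Matrix.isHermitian_conjTranspose_mul_self A).eigenvalues k))
      (Finset.univ.val : Multiset (Fin T))) (· ≤ ·)
  rw [svalList]
  rw [List.pairwise_reverse]
  exact h.imp (fun hab => hab)

lemma svalList_countP {N T : ℕ} (A : Matrix (Fin N) (Fin T) ℝ) (P : ℝ → Prop)
    [DecidablePred P] :
    (svalList A).countP (fun x => decide (P x)) =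
      (Finset.univ.filter (fun k =>
        P (Real.sqrt ((Matrix.isHermitian_conjTranspose_mul_self A).eigenvalues k)))).card := by
  classical
  rw [svalList]
  rw [List.countP_reverse]
  have h1 : ∀ (l : List ℝ), l.countP (fun x => decide (P x)) = Multiset.countP P (l : Multiset ℝ) := by
    intro l; rw [Multiset.coe_countP]
  rw [h1, Multiset.sort_eq, Multiset.countP_map]
  rw [Finset.card_def, Finset.filter_val]

lemma sval_le_of_count {N T : ℕ} (A : Matrix (Fin N) (Fin T) ℝ) (j : ℕ) {b : ℝ} (hb : 0 ≤ b)
    (h : (Finset.univ.filter (fun k =>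
      b < Real.sqrt ((Matrix.isHermitian_conjTranspose_mul_self A).eigenvalues k))).card ≤ j) :
    sval A j ≤ b := by
  show (svalList A).getD j 0 ≤ b
  apply auxGetDLe hb _ (svalList_sorted A)
  rw [svalList_countP A (fun x => b < x)]
  exact h

lemma le_sval_of_count {N T : ℕ} (A : Matrix (Fin N) (Fin T) ℝ) (j : ℕ) {a : ℝ}
    (h : j + 1 ≤ (Finset.univ.filter (fun k =>
      a ≤ Real.sqrt ((Matrix.isHermitian_conjTranspose_mul_self A).eigenvalues k))).card) :
    a ≤ sval A j := by
  show a ≤ (svalList A).getD j 0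
  apply auxLeGetD _ (svalList_sorted A)
  rw [svalList_countP A (fun x => a ≤ x)]
  exact h

/-! ### dot product basics -/

lemma dot_sq_le {m : ℕ} (x z : Fin m → ℝ) : (x ⬝ᵥ z) ^ 2 ≤ (x ⬝ᵥ x) * (z ⬝ᵥ z) := by
  have := Finset.sum_mul_sq_le_sq_mul_sq Finset.univ x z
  simpa [dotProduct, sq] using this

lemma dot_self_nonneg {m : ℕ} (x : Fin m → ℝ) : 0 ≤ x ⬝ᵥ x :=
  Finset.sum_nonneg fun i _ => mul_self_nonneg (x i)

lemma mulVec_sum' {n m : ℕ} {ι : Type*} (s : Finset ι) (A : Matrix (Fin n) (Fin m) ℝ)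
    (f : ι → (Fin m → ℝ)) : A *ᵥ (∑ i ∈ s, f i) = ∑ i ∈ s, A *ᵥ f i := by
  show A.mulVecLin _ = _
  rw [map_sum]; rfl

lemma dot_sum' {m : ℕ} {ι : Type*} (s : Finset ι) (x : Fin m → ℝ) (f : ι → Fin m → ℝ) :
    x ⬝ᵥ (∑ i ∈ s, f i) = ∑ i ∈ s, x ⬝ᵥ f i := by
  simp only [dotProduct, Finset.sum_apply, Finset.mul_sum]
  rw [Finset.sum_comm]

lemma sum_dot' {m : ℕ} {ι : Type*} (s : Finset ι) (x : Fin m → ℝ) (f : ι → Fin m → ℝ) :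
    (∑ i ∈ s, f i) ⬝ᵥ x = ∑ i ∈ s, f i ⬝ᵥ x := by
  simp only [dotProduct, Finset.sum_apply, Finset.sum_mul]
  rw [Finset.sum_comm]

/-! ### eigenvalue basics -/

lemma inner_eq_dot' {n : ℕ} (x y : EuclideanSpace ℝ (Fin n)) :
    (inner ℝ x y : ℝ) = (x : Fin n → ℝ) ⬝ᵥ (y : Fin n → ℝ) := by
  simp [PiLp.inner_apply, dotProduct, RCLike.inner_apply, starRingEnd_apply, mul_comm]

lemma eigvec_dot' {n : ℕ} {H : Matrix (Fin n) (Fin n) ℝ} (hH : H.IsHermitian) (k l : Fin n) :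
    (hH.eigenvectorBasis k : Fin n → ℝ) ⬝ᵥ (hH.eigenvectorBasis l : Fin n → ℝ) =
      if k = l then 1 else 0 := by
  rw [← inner_eq_dot']
  exact orthonormal_iff_ite.mp hH.eigenvectorBasis.orthonormal k l

lemma eig_le_of_form {n : ℕ} {H : Matrix (Fin n) (Fin n) ℝ} (hH : H.IsHermitian)
    {β : ℝ} (hf : ∀ x : Fin n → ℝ, x ⬝ᵥ (H *ᵥ x) ≤ β * (x ⬝ᵥ x))
    (k : Fin n) : hH.eigenvalues k ≤ β := by
  have hx : H *ᵥ (hH.eigenvectorBasis k : Fin n → ℝ) =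
      hH.eigenvalues k • (hH.eigenvectorBasis k : Fin n → ℝ) := hH.mulVec_eigenvectorBasis k
  have h1 := hf (hH.eigenvectorBasis k)
  rw [hx] at h1
  have h2 := eigvec_dot' hH k k
  rw [dotProduct_smul, h2] at h1
  simpa using h1

lemma exists_eig_eq {n : ℕ} {H : Matrix (Fin n) (Fin n) ℝ} (hH : H.IsHermitian)
    {x : Fin n → ℝ} {lam : ℝ} (hx0 : x ≠ 0) (hx : H *ᵥ x = lam • x) :
    ∃ k, hH.eigenvalues k = lam := by
  by_contra hcon
  push_neg at hcon
  apply hx0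
  have key : ∀ k, (hH.eigenvectorBasis k : Fin n → ℝ) ⬝ᵥ x = 0 := by
    intro k
    have h1 : (hH.eigenvectorBasis k : Fin n → ℝ) ⬝ᵥ (H *ᵥ x) =
        lam * ((hH.eigenvectorBasis k : Fin n → ℝ) ⬝ᵥ x) := by
      rw [hx, dotProduct_smul]; rfl
    have h2 : (hH.eigenvectorBasis k : Fin n → ℝ) ⬝ᵥ (H *ᵥ x) =
        hH.eigenvalues k * ((hH.eigenvectorBasis k : Fin n → ℝ) ⬝ᵥ x) := by
      rw [dotProduct_mulVec, ← mulVec_transpose]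
      have hHt : Hᵀ = H := by
        have := hH; rwa [IsHermitian, conjTranspose_eq_transpose_of_trivial] at this
      have hx2 : H *ᵥ (hH.eigenvectorBasis k : Fin n → ℝ) =
          hH.eigenvalues k • (hH.eigenvectorBasis k : Fin n → ℝ) := hH.mulVec_eigenvectorBasis k
      rw [hHt, hx2, smul_dotProduct]
      rfl
    have hne := sub_ne_zero.mpr (hcon k)
    have : (hH.eigenvalues k - lam) * ((hH.eigenvectorBasis k : Fin n → ℝ) ⬝ᵥ x) = 0 := by
      ring_nf; linarith [h1, h2]
    exact (mul_eq_zero.mp this).resolve_left hne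
  have hx' : (WithLp.toLp 2 x : EuclideanSpace ℝ (Fin n)) = 0 := by
    have hrepr := hH.eigenvectorBasis.sum_repr' (WithLp.toLp 2 x : EuclideanSpace ℝ (Fin n))
    rw [← hrepr]
    apply Finset.sum_eq_zero
    intro k _
    have : (inner ℝ (hH.eigenvectorBasis k) (WithLp.toLp 2 x : EuclideanSpace ℝ (Fin n)) : ℝ) = 0 := by
      rw [inner_eq_dot']; exact key k
    rw [this, zero_smul]
  exact congrArg WithLp.ofLp hx'

/-! ### counting eigenvalues above a threshold -/

lemma count_gt_le_rank {n : ℕ} {H : Matrix (Fin n) (Fin n) ℝ} (hH : H.IsHermitian)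
    (t : ℝ) (L : Matrix (Fin n) (Fin n) ℝ)
    (hform : ∀ x : Fin n → ℝ, x ⬝ᵥ (H *ᵥ x) - t * (x ⬝ᵥ x) ≤ x ⬝ᵥ (L *ᵥ x)) :
    (Finset.univ.filter (fun k => t < hH.eigenvalues k)).card ≤ L.rank := by
  classical
  set S := Finset.univ.filter (fun k => t < hH.eigenvalues k) with hS
  set u : Fin n → (Fin n → ℝ) := fun k => (hH.eigenvectorBasis k : Fin n → ℝ) with hu
  set v : S → LinearMap.range L.mulVecLin := fun k =>
    ⟨L *ᵥ u k, ⟨u k, rfl⟩⟩ with hv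
  have hli : LinearIndependent ℝ v := by
    rw [Fintype.linearIndependent_iff]
    intro g hg
    have hg' : (∑ k : S, g k • (L *ᵥ u k)) = 0 := by
      have := congrArg (Subtype.val) hg
      simpa [hv] using this
    set x : Fin n → ℝ := ∑ k : S, g k • u k with hx
    have hLx : L *ᵥ x = 0 := by
      rw [hx, mulVec_sum']
      simpa [mulVec_smul] using hg'
    have hdotL : x ⬝ᵥ (L *ᵥ x) = 0 := by rw [hLx, dotProduct_zero]
    have key : ∀ h : S → ℝ, x ⬝ᵥ (∑ l : S, h l • u l) = ∑ k : S, g k * h k := by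
      intro h
      rw [hx, sum_dot']
      apply Finset.sum_congr rfl
      intro k _
      rw [smul_dotProduct, dot_sum', smul_eq_mul]
      congr 1
      have hterm : ∀ l : S, (u k) ⬝ᵥ (h l • u l) = if l = k then h l else 0 := by
        intro l
        rw [dotProduct_smul, smul_eq_mul, eigvec_dot' hH (k : Fin n) (l : Fin n)]
        by_cases hkl : l = k
        · simp [hkl]
        · have : ¬((k : Fin n) = (l : Fin n)) := fun hc => hkl (Subtype.ext hc.symm)
          simp [hkl, this]
      rw [Finset.sum_congr rfl (fun l _ => hterm l), Finset.sum_ite_eq' Finset.univ k]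
      simp
    have hHx : H *ᵥ x = ∑ k : S, (g k * hH.eigenvalues k) • u k := by
      rw [hx, mulVec_sum']
      apply Finset.sum_congr rfl
      intro k _
      have hx2 : H *ᵥ u k = hH.eigenvalues (k : Fin n) • u k := hH.mulVec_eigenvectorBasis k
      rw [mulVec_smul, hx2, smul_smul]
    have hxHx : x ⬝ᵥ (H *ᵥ x) = ∑ k : S, g k ^ 2 * hH.eigenvalues k := by
      rw [hHx, key]
      exact Finset.sum_congr rfl (fun k _ => by ring)
    have hxx : x ⬝ᵥ x = ∑ k : S, g k ^ 2 := by
      have := key (fun l => g l)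
      rw [← hx] at this
      rw [this]
      exact Finset.sum_congr rfl (fun k _ => by ring)
    have hmain := hform x
    rw [hxHx, hxx, hdotL, Finset.mul_sum, ← Finset.sum_sub_distrib] at hmain
    have hterm_nonneg : ∀ k : S, (0:ℝ) ≤ g k ^ 2 * hH.eigenvalues k - t * g k ^ 2 := by
      intro k
      have hk : t < hH.eigenvalues (k : Fin n) := (Finset.mem_filter.mp k.2).2
      nlinarith [sq_nonneg (g k)]
    have hzero : ∀ k : S, g k ^ 2 * hH.eigenvalues k - t * g k ^ 2 = 0 := by
      have hsum0 : (∑ k : S, (g k ^ 2 * hH.eigenvalues k - t * g k ^ 2)) = 0 :=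
        le_antisymm hmain (Finset.sum_nonneg (fun k _ => hterm_nonneg k))
      intro k
      exact (Finset.sum_eq_zero_iff_of_nonneg (fun k _ => hterm_nonneg k)).mp hsum0 k
        (Finset.mem_univ k)
    intro k
    have hk : t < hH.eigenvalues (k : Fin n) := (Finset.mem_filter.mp k.2).2
    have h1 := hzero k
    have h2 : g k ^ 2 * (hH.eigenvalues (k : Fin n) - t) = 0 := by ring_nf; ring_nf at h1; linarith
    have h3 : g k ^ 2 = 0 := (mul_eq_zero.mp h2).resolve_right (ne_of_gt (sub_pos.mpr hk))
    exact pow_eq_zero_iff (by norm_num) |>.mp h3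
  have hcard := hli.fintype_card_le_finrank
  simpa [Matrix.rank, Fintype.card_coe] using hcard

/-! ### quadratic form lemmas -/

lemma proj_form_le {n r : ℕ} (W : Matrix (Fin n) (Fin r) ℝ) (C₂ : ℝ) (hC₂ : 0 ≤ C₂)
    (hG : ∀ y : Fin r → ℝ, y ⬝ᵥ ((Wᵀ * W) *ᵥ y) ≤ C₂ * (y ⬝ᵥ y)) (x : Fin n → ℝ) :
    (Wᵀ *ᵥ x) ⬝ᵥ (Wᵀ *ᵥ x) ≤ C₂ * (x ⬝ᵥ x) := by
  set y := Wᵀ *ᵥ x with hy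
  set p := y ⬝ᵥ y with hp
  have hq : y ⬝ᵥ ((Wᵀ * W) *ᵥ y) = (W *ᵥ y) ⬝ᵥ (W *ᵥ y) := by
    rw [← mulVec_mulVec, dotProduct_mulVec y Wᵀ, ← mulVec_transpose, transpose_transpose]
  have hxy : x ⬝ᵥ (W *ᵥ y) = p := by
    rw [dotProduct_mulVec x W, ← mulVec_transpose, hp, hy, dotProduct_comm]
  have hcs := dot_sq_le x (W *ᵥ y)
  rw [hxy] at hcs
  have hq2 : (W *ᵥ y) ⬝ᵥ (W *ᵥ y) ≤ C₂ * p := by rw [← hq]; exact hG y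
  by_cases hp0 : p ≤ 0
  · have hp0' : p = 0 := le_antisymm hp0 (dot_self_nonneg y)
    rw [hp0']
    exact mul_nonneg hC₂ (dot_self_nonneg x)
  · push_neg at hp0
    have h3 : p ^ 2 ≤ (x ⬝ᵥ x) * (C₂ * p) :=
      le_trans hcs (by
        apply mul_le_mul_of_nonneg_left hq2 (dot_self_nonneg x))
    nlinarith [dot_self_nonneg x]

lemma eig_dichotomy {n r : ℕ} (W : Matrix (Fin n) (Fin r) ℝ) (Sm : Matrix (Fin r) (Fin r) ℝ)
    {H : Matrix (Fin n) (Fin n) ℝ} (hH : H.IsHermitian) (hHeq : H = W * Sm * Wᵀ)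
    (c₁ c₂ : ℝ) (hc₁ : 0 ≤ c₁)
    (hS : ∀ y : Fin r → ℝ, c₁ * (y ⬝ᵥ y) ≤ y ⬝ᵥ (Sm *ᵥ y))
    (hW : ∀ w : Fin r → ℝ, c₂ * (w ⬝ᵥ w) ≤ w ⬝ᵥ ((Wᵀ * W) *ᵥ w))
    (k : Fin n) :
    hH.eigenvalues k = 0 ∨ c₁ * c₂ ≤ hH.eigenvalues k := by
  classical
  set lam := hH.eigenvalues k with hlam
  by_cases hlam0 : lam = 0
  · exact Or.inl hlam0
  right
  have hx : H *ᵥ (hH.eigenvectorBasis k : Fin n → ℝ) =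
      lam • (hH.eigenvectorBasis k : Fin n → ℝ) := hH.mulVec_eigenvectorBasis k
  set x : Fin n → ℝ := (hH.eigenvectorBasis k : Fin n → ℝ) with hxdef
  have hxx : x ⬝ᵥ x = 1 := by
    have h := eigvec_dot' hH k k
    rw [if_pos rfl] at h
    exact h
  set y : Fin r → ℝ := Wᵀ *ᵥ x with hy
  set w : Fin r → ℝ := lam⁻¹ • (Sm *ᵥ y) with hw
  have hxw : W *ᵥ w = x := by
    rw [hw, mulVec_smul]
    have h1 : W *ᵥ (Sm *ᵥ y) = lam • x := by
      rw [hy, mulVec_mulVec, mulVec_mulVec, ← hHeq, hx]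
    rw [h1, smul_smul, inv_mul_cancel₀ hlam0, one_smul]
  set G := Wᵀ * W with hG
  have hyG : y = G *ᵥ w := by rw [hG, ← mulVec_mulVec, hxw, hy]
  have hwGw : w ⬝ᵥ (G *ᵥ w) = 1 := by
    have : w ⬝ᵥ (G *ᵥ w) = (W *ᵥ w) ⬝ᵥ (W *ᵥ w) := by
      rw [hG, ← mulVec_mulVec, dotProduct_mulVec w Wᵀ, ← mulVec_transpose, transpose_transpose]
    rw [this, hxw, hxx]
  have hww : (0:ℝ) < w ⬝ᵥ w := by
    rcases eq_or_lt_of_le (dot_self_nonneg w) with h0 | h0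
    · exfalso
      have hw0 : w = 0 := dotProduct_self_eq_zero.mp h0.symm
      rw [hw0] at hwGw
      simp at hwGw
    · exact h0
  have hGw_sq : c₂ ≤ (G *ᵥ w) ⬝ᵥ (G *ᵥ w) := by
    have hcs := dot_sq_le w (G *ᵥ w)
    rw [hwGw] at hcs
    have h2 := hW w
    rw [hwGw] at h2
    nlinarith [dot_self_nonneg (G *ᵥ w)]
  have hxHx : x ⬝ᵥ (H *ᵥ x) = lam := by rw [hx, dotProduct_smul, smul_eq_mul, hxx, mul_one]
  have hform : x ⬝ᵥ (H *ᵥ x) = y ⬝ᵥ (Sm *ᵥ y) := by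
    rw [hHeq, ← mulVec_mulVec, ← mulVec_mulVec, dotProduct_mulVec x W, ← mulVec_transpose, hy]
  have h5 : c₁ * (y ⬝ᵥ y) ≤ lam := by rw [← hxHx, hform]; exact hS y
  have h6 : c₁ * c₂ ≤ c₁ * (y ⬝ᵥ y) := by
    apply mul_le_mul_of_nonneg_left _ hc₁
    rw [hyG]; exact hGw_sq
  linarith

lemma quad_diag {n r : ℕ} (V : Matrix (Fin n) (Fin r) ℝ) (w : Fin r → ℝ) (x : Fin n → ℝ) :
    x ⬝ᵥ ((V * Matrix.diagonal w * Vᵀ) *ᵥ x) = ∑ k, w k * ((Vᵀ *ᵥ x) k)^2 := by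
  rw [← mulVec_mulVec, ← mulVec_mulVec, dotProduct_mulVec x V, ← mulVec_transpose]
  simp only [dotProduct, mulVec_diagonal]
  apply Finset.sum_congr rfl
  intro k _
  ring

set_option maxHeartbeats 4000000 in
/-- Singular values of a submatrix: if `M = U D Vᵀ` is a rank-`r` SVD and the rows of
`U` (resp. `V`) indexed by the submatrix are well spread, then
`ψ₁(M₀) ≤ C ψ₁(M) √(N₀T₀/(NT))` and `ψ_r(M₀) ≥ c ψ_r(M) √(N₀T₀/(NT))`; in particular
`M₀` has rank `r` and condition number `κ₀ ≤ (C/c) κ`. -/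
theorem stmt13 (N T N₀ T₀ r : ℕ) (hr : 0 < r) (hN₀ : 0 < N₀) (hT₀ : 0 < T₀)
    (hN : N₀ ≤ N) (hT : T₀ ≤ T)
    (U : Matrix (Fin N) (Fin r) ℝ) (V : Matrix (Fin T) (Fin r) ℝ) (d : Fin r → ℝ)
    (hU : Uᵀ * U = 1) (hV : Vᵀ * V = 1) (hd : ∀ k, 0 < d k)
    (M : Matrix (Fin N) (Fin T) ℝ) (hM : M = U * Matrix.diagonal d * Vᵀ)
    (M₀ : Matrix (Fin N₀) (Fin T₀) ℝ)
    (hM₀ : M₀ = M.submatrix (Fin.castLE hN) (Fin.castLE hT))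
    (c C : ℝ) (hc : 0 < c) (hcC : c ≤ C)
    (hUlow : (((N : ℝ) / N₀) • (∑ i : Fin N₀, vecMulVec (fun k => U (Fin.castLE hN i) k)
        (fun k => U (Fin.castLE hN i) k)) - c • (1 : Matrix (Fin r) (Fin r) ℝ)).PosSemidef)
    (hUhigh : (C • (1 : Matrix (Fin r) (Fin r) ℝ) -
        ((N : ℝ) / N₀) • (∑ i : Fin N₀, vecMulVec (fun k => U (Fin.castLE hN i) k)
        (fun k => U (Fin.castLE hN i) k))).PosSemidef)
    (hVlow : (((T : ℝ) / T₀) • (∑ t : Fin T₀, vecMulVec (fun k => V (Fin.castLE hT t) k)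
        (fun k => V (Fin.castLE hT t) k)) - c • (1 : Matrix (Fin r) (Fin r) ℝ)).PosSemidef)
    (hVhigh : (C • (1 : Matrix (Fin r) (Fin r) ℝ) -
        ((T : ℝ) / T₀) • (∑ t : Fin T₀, vecMulVec (fun k => V (Fin.castLE hT t) k)
        (fun k => V (Fin.castLE hT t) k))).PosSemidef) :
    sval M₀ 0 ≤ C * sval M 0 * Real.sqrt ((N₀ * T₀ : ℝ) / (N * T)) ∧
    c * sval M (r - 1) * Real.sqrt ((N₀ * T₀ : ℝ) / (N * T)) ≤ sval M₀ (r - 1) ∧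
    M₀.rank = r ∧
    sval M₀ 0 / sval M₀ (r - 1) ≤ (C / c) * (sval M 0 / sval M (r - 1)) := by
  classical
  have hNpos : 0 < N := lt_of_lt_of_le hN₀ hN
  have hTpos : 0 < T := lt_of_lt_of_le hT₀ hT
  have hNr : (0:ℝ) < (N:ℝ) := by exact_mod_cast hNpos
  have hTr : (0:ℝ) < (T:ℝ) := by exact_mod_cast hTpos
  have hN0r : (0:ℝ) < (N₀:ℝ) := by exact_mod_cast hN₀
  have hT0r : (0:ℝ) < (T₀:ℝ) := by exact_mod_cast hT₀
  have hCpos : 0 < C := lt_of_lt_of_le hc hcC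
  set U₀ : Matrix (Fin N₀) (Fin r) ℝ := U.submatrix (Fin.castLE hN) id with hU₀def
  set V₀ : Matrix (Fin T₀) (Fin r) ℝ := V.submatrix (Fin.castLE hT) id with hV₀def
  have hsumU : (∑ i : Fin N₀, vecMulVec (fun k => U (Fin.castLE hN i) k)
      (fun k => U (Fin.castLE hN i) k)) = U₀ᵀ * U₀ := by
    ext k l
    simp [Matrix.sum_apply, vecMulVec_apply, Matrix.mul_apply, hU₀def, mul_comm]
  have hsumV : (∑ t : Fin T₀, vecMulVec (fun k => V (Fin.castLE hT t) k)
      (fun k => V (Fin.castLE hT t) k)) = V₀ᵀ * V₀ := by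
    ext k l
    simp [Matrix.sum_apply, vecMulVec_apply, Matrix.mul_apply, hV₀def, mul_comm]
  rw [hsumU] at hUlow hUhigh
  rw [hsumV] at hVlow hVhigh
  set cN := c * N₀ / N with hcN
  set CN := C * N₀ / N with hCN
  set cT := c * T₀ / T with hcT
  set CT := C * T₀ / T with hCT
  have hcNpos : 0 < cN := div_pos (mul_pos hc hN0r) hNr
  have hCNpos : 0 < CN := div_pos (mul_pos hCpos hN0r) hNr
  have hcTpos : 0 < cT := div_pos (mul_pos hc hT0r) hTr
  have hCTpos : 0 < CT := div_pos (mul_pos hCpos hT0r) hTr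
  -- quadratic form bounds on U₀ᵀU₀ and V₀ᵀV₀
  have formU_lo : ∀ x : Fin r → ℝ, cN * (x ⬝ᵥ x) ≤ x ⬝ᵥ ((U₀ᵀ * U₀) *ᵥ x) := by
    intro x
    have h := hUlow.dotProduct_mulVec_nonneg x
    simp only [sub_mulVec, smul_mulVec, one_mulVec, dotProduct_sub, dotProduct_smul,
      star_trivial, smul_eq_mul, sub_nonneg] at h
    rw [hcN, div_mul_eq_mul_div, div_le_iff₀ hNr]
    rw [div_mul_eq_mul_div, le_div_iff₀ hN0r] at h
    nlinarith [h]
  have formU_hi : ∀ x : Fin r → ℝ, x ⬝ᵥ ((U₀ᵀ * U₀) *ᵥ x) ≤ CN * (x ⬝ᵥ x) := by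
    intro x
    have h := hUhigh.dotProduct_mulVec_nonneg x
    simp only [sub_mulVec, smul_mulVec, one_mulVec, dotProduct_sub, dotProduct_smul,
      star_trivial, smul_eq_mul, sub_nonneg] at h
    rw [hCN, div_mul_eq_mul_div, le_div_iff₀ hNr]
    rw [div_mul_eq_mul_div, div_le_iff₀ hN0r] at h
    nlinarith [h]
  have formV_lo : ∀ x : Fin r → ℝ, cT * (x ⬝ᵥ x) ≤ x ⬝ᵥ ((V₀ᵀ * V₀) *ᵥ x) := by
    intro x
    have h := hVlow.dotProduct_mulVec_nonneg x
    simp only [sub_mulVec, smul_mulVec, one_mulVec, dotProduct_sub, dotProduct_smul,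
      star_trivial, smul_eq_mul, sub_nonneg] at h
    rw [hcT, div_mul_eq_mul_div, div_le_iff₀ hTr]
    rw [div_mul_eq_mul_div, le_div_iff₀ hT0r] at h
    nlinarith [h]
  have formV_hi : ∀ x : Fin r → ℝ, x ⬝ᵥ ((V₀ᵀ * V₀) *ᵥ x) ≤ CT * (x ⬝ᵥ x) := by
    intro x
    have h := hVhigh.dotProduct_mulVec_nonneg x
    simp only [sub_mulVec, smul_mulVec, one_mulVec, dotProduct_sub, dotProduct_smul,
      star_trivial, smul_eq_mul, sub_nonneg] at h
    rw [hCT, div_mul_eq_mul_div, le_div_iff₀ hTr]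
    rw [div_mul_eq_mul_div, div_le_iff₀ hT0r] at h
    nlinarith [h]
  -- min and max of d
  obtain ⟨k0, -, hk0⟩ := Finset.exists_min_image Finset.univ d ⟨⟨0, hr⟩, Finset.mem_univ _⟩
  obtain ⟨k1, -, hk1⟩ := Finset.exists_max_image Finset.univ d ⟨⟨0, hr⟩, Finset.mem_univ _⟩
  have hdminpos : 0 < d k0 := hd k0
  have hdmaxpos : 0 < d k1 := hd k1
  -- matrix identities
  have hM₀eq : M₀ = U₀ * Matrix.diagonal d * V₀ᵀ := by
    rw [hM₀, hM]
    ext i j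
    simp [Matrix.mul_apply, Matrix.submatrix_apply, hU₀def, hV₀def]
  set S₀ := Matrix.diagonal d * (U₀ᵀ * U₀) * Matrix.diagonal d with hS₀def
  have hH₀eq : M₀ᴴ * M₀ = V₀ * S₀ * V₀ᵀ := by
    rw [Matrix.conjTranspose_eq_transpose_of_trivial, hM₀eq, hS₀def]
    simp only [Matrix.transpose_mul, Matrix.diagonal_transpose, Matrix.transpose_transpose,
      Matrix.mul_assoc]
  have hHMeq : Mᴴ * M = V * Matrix.diagonal (fun k => d k * d k) * Vᵀ := by
    rw [Matrix.conjTranspose_eq_transpose_of_trivial, hM]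
    simp only [Matrix.transpose_mul, Matrix.diagonal_transpose, Matrix.transpose_transpose,
      Matrix.mul_assoc]
    rw [← Matrix.mul_assoc Uᵀ U (Matrix.diagonal d * Vᵀ), hU, Matrix.one_mul,
      ← Matrix.mul_assoc (Matrix.diagonal d) (Matrix.diagonal d) Vᵀ,
      Matrix.diagonal_mul_diagonal]
  -- quadratic bounds for S₀
  have hquadS₀ : ∀ y : Fin r → ℝ, y ⬝ᵥ (S₀ *ᵥ y) =
      (Matrix.diagonal d *ᵥ y) ⬝ᵥ ((U₀ᵀ * U₀) *ᵥ (Matrix.diagonal d *ᵥ y)) := by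
    intro y
    rw [hS₀def, ← mulVec_mulVec, ← mulVec_mulVec, dotProduct_mulVec y (Matrix.diagonal d),
      ← mulVec_transpose, Matrix.diagonal_transpose]
  have hDy_lo : ∀ y : Fin r → ℝ, (d k0)^2 * (y ⬝ᵥ y) ≤
      (Matrix.diagonal d *ᵥ y) ⬝ᵥ (Matrix.diagonal d *ᵥ y) := by
    intro y
    simp only [dotProduct, mulVec_diagonal, Finset.mul_sum]
    apply Finset.sum_le_sum
    intro i _
    have h1 := hk0 i (Finset.mem_univ i)
    have h2 := hd i
    nlinarith [mul_self_nonneg (y i), mul_le_mul h1 h1 hdminpos.le h2.le]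
  have hDy_hi : ∀ y : Fin r → ℝ,
      (Matrix.diagonal d *ᵥ y) ⬝ᵥ (Matrix.diagonal d *ᵥ y) ≤ (d k1)^2 * (y ⬝ᵥ y) := by
    intro y
    simp only [dotProduct, mulVec_diagonal, Finset.mul_sum]
    apply Finset.sum_le_sum
    intro i _
    have h1 := hk1 i (Finset.mem_univ i)
    have h2 := hd i
    nlinarith [mul_self_nonneg (y i), mul_le_mul h1 h1 h2.le hdmaxpos.le]
  have hS₀_lo : ∀ y : Fin r → ℝ, (cN * (d k0)^2) * (y ⬝ᵥ y) ≤ y ⬝ᵥ (S₀ *ᵥ y) := by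
    intro y
    rw [hquadS₀]
    have h1 := formU_lo (Matrix.diagonal d *ᵥ y)
    have h2 := hDy_lo y
    calc (cN * (d k0)^2) * (y ⬝ᵥ y) = cN * ((d k0)^2 * (y ⬝ᵥ y)) := by ring
    _ ≤ cN * ((Matrix.diagonal d *ᵥ y) ⬝ᵥ (Matrix.diagonal d *ᵥ y)) :=
        mul_le_mul_of_nonneg_left h2 hcNpos.le
    _ ≤ _ := h1
  have hS₀_hi : ∀ y : Fin r → ℝ, y ⬝ᵥ (S₀ *ᵥ y) ≤ (CN * (d k1)^2) * (y ⬝ᵥ y) := by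
    intro y
    rw [hquadS₀]
    have h1 := formU_hi (Matrix.diagonal d *ᵥ y)
    have h2 := hDy_hi y
    calc (Matrix.diagonal d *ᵥ y) ⬝ᵥ ((U₀ᵀ * U₀) *ᵥ (Matrix.diagonal d *ᵥ y)) ≤
        CN * ((Matrix.diagonal d *ᵥ y) ⬝ᵥ (Matrix.diagonal d *ᵥ y)) := h1
    _ ≤ CN * ((d k1)^2 * (y ⬝ᵥ y)) := mul_le_mul_of_nonneg_left h2 hCNpos.le
    _ = (CN * (d k1)^2) * (y ⬝ᵥ y) := by ring
  -- eigenvalue bounds for M₀ᵀM₀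
  have hH₀ := Matrix.isHermitian_conjTranspose_mul_self M₀
  set β := CN * (d k1)^2 * CT with hβdef
  have hH₀_hi : ∀ x : Fin T₀ → ℝ, x ⬝ᵥ ((M₀ᴴ * M₀) *ᵥ x) ≤ β * (x ⬝ᵥ x) := by
    intro x
    have hq : x ⬝ᵥ ((M₀ᴴ * M₀) *ᵥ x) = (V₀ᵀ *ᵥ x) ⬝ᵥ (S₀ *ᵥ (V₀ᵀ *ᵥ x)) := by
      rw [hH₀eq, ← mulVec_mulVec, ← mulVec_mulVec, dotProduct_mulVec x V₀, ← mulVec_transpose]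
    rw [hq]
    have h1 := hS₀_hi (V₀ᵀ *ᵥ x)
    have h2 := proj_form_le V₀ CT hCTpos.le formV_hi x
    calc (V₀ᵀ *ᵥ x) ⬝ᵥ (S₀ *ᵥ (V₀ᵀ *ᵥ x)) ≤ (CN * (d k1)^2) * ((V₀ᵀ *ᵥ x) ⬝ᵥ (V₀ᵀ *ᵥ x)) := h1
    _ ≤ (CN * (d k1)^2) * (CT * (x ⬝ᵥ x)) :=
        mul_le_mul_of_nonneg_left h2 (by positivity)
    _ = β * (x ⬝ᵥ x) := by ring
  have hμ₀_hi : ∀ k, hH₀.eigenvalues k ≤ β := eig_le_of_form hH₀ hH₀_hi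
  set α := cN * (d k0)^2 * cT with hαdef
  have hμ₀_dich : ∀ k, hH₀.eigenvalues k = 0 ∨ α ≤ hH₀.eigenvalues k := by
    intro k
    have := eig_dichotomy V₀ S₀ hH₀ hH₀eq (cN * (d k0)^2) cT (by positivity) hS₀_lo formV_lo k
    rcases this with h | h
    · exact Or.inl h
    · exact Or.inr h
  -- positivity of Gram matrices and rank of M₀
  have hdotpos : ∀ {m : ℕ} (x : Fin m → ℝ), x ≠ 0 → 0 < x ⬝ᵥ x := by
    intro m x hx
    rcases lt_or_eq_of_le (dot_self_nonneg x) with h | h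
    · exact h
    · exact absurd (dotProduct_self_eq_zero.mp h.symm) hx
  have hGU_pd : (U₀ᵀ * U₀).PosDef := by
    refine .of_dotProduct_mulVec_pos (isHermitian_conjTranspose_mul_self U₀) fun x hx => ?_
    have h1 := formU_lo x
    have h2 : 0 < cN * (x ⬝ᵥ x) := mul_pos hcNpos (hdotpos x hx)
    simpa using lt_of_lt_of_le h2 h1
  have hGV_pd : (V₀ᵀ * V₀).PosDef := by
    refine .of_dotProduct_mulVec_pos (isHermitian_conjTranspose_mul_self V₀) fun x hx => ?_
    have h1 := formV_lo x
    have h2 : 0 < cT * (x ⬝ᵥ x) := mul_pos hcTpos (hdotpos x hx)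
    simpa using lt_of_lt_of_le h2 h1
  have hAeq : U₀ᵀ * M₀ * V₀ = (U₀ᵀ * U₀) * Matrix.diagonal d * (V₀ᵀ * V₀) := by
    rw [hM₀eq]
    simp only [Matrix.mul_assoc]
  have hdetD : Matrix.det (Matrix.diagonal d) ≠ 0 := by
    rw [Matrix.det_diagonal]
    exact (Finset.prod_pos (fun i _ => hd i)).ne'
  have hunit : IsUnit (U₀ᵀ * M₀ * V₀) := by
    rw [Matrix.isUnit_iff_isUnit_det, hAeq, Matrix.det_mul, Matrix.det_mul, isUnit_iff_ne_zero]
    exact mul_ne_zero (mul_ne_zero hGU_pd.det_pos.ne' hdetD) hGV_pd.det_pos.ne'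
  have hrankM₀ : M₀.rank = r := by
    have h1 : (U₀ᵀ * M₀ * V₀).rank = r := by
      rw [Matrix.rank_of_isUnit _ hunit, Fintype.card_fin]
    have h2 : (U₀ᵀ * M₀ * V₀).rank ≤ M₀.rank :=
      le_trans (Matrix.rank_mul_le_left _ _) (Matrix.rank_mul_le_right _ _)
    have h3 : M₀.rank ≤ r := by
      rw [hM₀eq]
      exact le_trans (Matrix.rank_mul_le_left _ _)
        (le_trans (Matrix.rank_mul_le_right _ _) (Matrix.rank_le_width _))
    omega
  -- rank of M
  have hAMeq : Uᵀ * M * V = Matrix.diagonal d := by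
    rw [hM]
    simp only [Matrix.mul_assoc]
    rw [hV, Matrix.mul_one, ← Matrix.mul_assoc, hU, Matrix.one_mul]
  have hrankM : M.rank = r := by
    have h1 : (Uᵀ * M * V).rank = r := by
      rw [hAMeq, Matrix.rank_of_isUnit _ (by rwa [Matrix.isUnit_iff_isUnit_det, isUnit_iff_ne_zero]),
        Fintype.card_fin]
    have h2 : (Uᵀ * M * V).rank ≤ M.rank :=
      le_trans (Matrix.rank_mul_le_left _ _) (Matrix.rank_mul_le_right _ _)
    have h3 : M.rank ≤ r := by
      rw [hM]
      exact le_trans (Matrix.rank_mul_le_left _ _)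
        (le_trans (Matrix.rank_mul_le_right _ _) (Matrix.rank_le_width _))
    omega
  -- count of large eigenvalues of M₀ᵀM₀
  have hcount₀ : r ≤ (Finset.univ.filter (fun k => α ≤ hH₀.eigenvalues k)).card := by
    have h1 : (M₀ᴴ * M₀).rank = r := by
      rw [Matrix.conjTranspose_eq_transpose_of_trivial, Matrix.rank_transpose_mul_self]
      exact hrankM₀
    rw [hH₀.rank_eq_card_non_zero_eigs, Fintype.card_subtype] at h1
    rw [← h1]
    apply Finset.card_le_card
    intro k hk
    rw [Finset.mem_filter] at hk ⊢
    refine ⟨Finset.mem_univ _, ?_⟩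
    rcases hμ₀_dich k with h | h
    · exact absurd h hk.2
    · exact h
  -- eigenvalue facts for MᵀM
  have hHM := Matrix.isHermitian_conjTranspose_mul_self M
  have formV1_hi : ∀ y : Fin r → ℝ, y ⬝ᵥ ((Vᵀ * V) *ᵥ y) ≤ 1 * (y ⬝ᵥ y) := by
    intro y
    rw [hV, one_mulVec, one_mul]
  have formV1_lo : ∀ y : Fin r → ℝ, 1 * (y ⬝ᵥ y) ≤ y ⬝ᵥ ((Vᵀ * V) *ᵥ y) := by
    intro y
    rw [hV, one_mulVec, one_mul]
  have hSM_lo : ∀ y : Fin r → ℝ, (d k0)^2 * (y ⬝ᵥ y) ≤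
      y ⬝ᵥ (Matrix.diagonal (fun k => d k * d k) *ᵥ y) := by
    intro y
    simp only [dotProduct, mulVec_diagonal, Finset.mul_sum]
    apply Finset.sum_le_sum
    intro i _
    have h1 := hk0 i (Finset.mem_univ i)
    have h2 := hd i
    nlinarith [mul_self_nonneg (y i), mul_le_mul h1 h1 hdminpos.le h2.le]
  have hHM_hi : ∀ x : Fin T → ℝ, x ⬝ᵥ ((Mᴴ * M) *ᵥ x) ≤ (d k1)^2 * (x ⬝ᵥ x) := by
    intro x
    rw [hHMeq, quad_diag]
    have h2 := proj_form_le V 1 zero_le_one formV1_hi x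
    have h3 : ∑ k, (d k * d k) * ((Vᵀ *ᵥ x) k)^2 ≤ (d k1)^2 * ((Vᵀ *ᵥ x) ⬝ᵥ (Vᵀ *ᵥ x)) := by
      simp only [dotProduct, Finset.mul_sum]
      apply Finset.sum_le_sum
      intro i _
      have h1 := hk1 i (Finset.mem_univ i)
      have h2 := hd i
      nlinarith [sq_nonneg ((Vᵀ *ᵥ x) i), mul_self_nonneg ((Vᵀ *ᵥ x) i),
        mul_le_mul h1 h1 h2.le hdmaxpos.le]
    calc ∑ k, (d k * d k) * ((Vᵀ *ᵥ x) k)^2 ≤ (d k1)^2 * ((Vᵀ *ᵥ x) ⬝ᵥ (Vᵀ *ᵥ x)) := h3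
    _ ≤ (d k1)^2 * (1 * (x ⬝ᵥ x)) := mul_le_mul_of_nonneg_left h2 (by positivity)
    _ = (d k1)^2 * (x ⬝ᵥ x) := by ring
  have hμM_hi : ∀ k, hHM.eigenvalues k ≤ (d k1)^2 := eig_le_of_form hHM hHM_hi
  have hμM_dich : ∀ k, hHM.eigenvalues k = 0 ∨ (d k0)^2 ≤ hHM.eigenvalues k := by
    intro k
    have := eig_dichotomy V (Matrix.diagonal (fun k => d k * d k)) hHM hHMeq
      ((d k0)^2) 1 (by positivity) hSM_lo formV1_lo k
    rcases this with h | h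
    · exact Or.inl h
    · right; linarith
  have hcountM : r ≤ (Finset.univ.filter (fun k => (d k0)^2 ≤ hHM.eigenvalues k)).card := by
    have h1 : (Mᴴ * M).rank = r := by
      rw [Matrix.conjTranspose_eq_transpose_of_trivial, Matrix.rank_transpose_mul_self]
      exact hrankM
    rw [hHM.rank_eq_card_non_zero_eigs, Fintype.card_subtype] at h1
    rw [← h1]
    apply Finset.card_le_card
    intro k hk
    rw [Finset.mem_filter] at hk ⊢
    refine ⟨Finset.mem_univ _, ?_⟩
    rcases hμM_dich k with h | h
    · exact absurd h hk.2
    · exact h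
  -- existence of the top eigenvalue d k1 ^ 2 for MᵀM
  have hexistM : ∃ k, hHM.eigenvalues k = d k1 * d k1 := by
    set e1 : Fin T → ℝ := V *ᵥ Pi.single k1 1 with he1
    have hsingle : (Pi.single k1 ((d k1 * d k1) * 1) : Fin r → ℝ) =
        ((d k1) * (d k1)) • (Pi.single k1 (1:ℝ) : Fin r → ℝ) := by
      funext j
      by_cases hj : j = k1 <;> simp [Pi.single_apply, hj]
    have he1x : (Mᴴ * M) *ᵥ e1 = ((d k1) * (d k1)) • e1 := by
      rw [hHMeq, he1, mulVec_mulVec]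
      have hmm : V * Matrix.diagonal (fun k => d k * d k) * Vᵀ * V =
          V * Matrix.diagonal (fun k => d k * d k) := by
        rw [Matrix.mul_assoc (V * Matrix.diagonal (fun k => d k * d k)) Vᵀ V, hV, Matrix.mul_one]
      rw [hmm, ← mulVec_mulVec, Matrix.diagonal_mulVec_single, hsingle, mulVec_smul]
    have he1dot : e1 ⬝ᵥ e1 = 1 := by
      have h : Pi.single k1 (1:ℝ) ⬝ᵥ ((Vᵀ * V) *ᵥ Pi.single k1 1) = e1 ⬝ᵥ e1 := by
        rw [he1, ← mulVec_mulVec, dotProduct_mulVec (Pi.single k1 1) Vᵀ]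
        congr 1
        rw [← mulVec_transpose, transpose_transpose]
      rw [← h, hV, one_mulVec, single_dotProduct]
      simp
    have he1ne : e1 ≠ 0 := by
      intro h0
      rw [h0] at he1dot
      simp at he1dot
    exact exists_eig_eq hHM he1ne he1x
  -- count of eigenvalues of MᵀM above d k0 ^ 2
  set ev : Fin r → ℝ := fun k => max ((d k)^2 - (d k0)^2) 0 with hev
  set L := V * Matrix.diagonal ev * Vᵀ with hLdef
  have hLform : ∀ x : Fin T → ℝ,
      x ⬝ᵥ ((Mᴴ * M) *ᵥ x) - (d k0)^2 * (x ⬝ᵥ x) ≤ x ⬝ᵥ (L *ᵥ x) := by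
    intro x
    rw [hLdef, quad_diag V ev x, hHMeq, quad_diag]
    have h2 := proj_form_le V 1 zero_le_one formV1_hi x
    rw [one_mul] at h2
    have hyy : (Vᵀ *ᵥ x) ⬝ᵥ (Vᵀ *ᵥ x) = ∑ k, ((Vᵀ *ᵥ x) k)^2 := by
      simp [dotProduct, sq]
    have h3 : (d k0)^2 * ((Vᵀ *ᵥ x) ⬝ᵥ (Vᵀ *ᵥ x)) ≤ (d k0)^2 * (x ⬝ᵥ x) :=
      mul_le_mul_of_nonneg_left h2 (by positivity)
    have h4 : ∑ k, (d k * d k) * ((Vᵀ *ᵥ x) k)^2 - (d k0)^2 * ((Vᵀ *ᵥ x) ⬝ᵥ (Vᵀ *ᵥ x)) ≤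
        ∑ k, ev k * ((Vᵀ *ᵥ x) k)^2 := by
      rw [hyy, Finset.mul_sum, ← Finset.sum_sub_distrib]
      apply Finset.sum_le_sum
      intro k _
      have h5 : (d k)^2 - (d k0)^2 ≤ ev k := le_max_left _ _
      nlinarith [sq_nonneg ((Vᵀ *ᵥ x) k)]
    linarith
  have hcountM_hi : (Finset.univ.filter (fun k => (d k0)^2 < hHM.eigenvalues k)).card ≤ r - 1 := by
    have h1 := count_gt_le_rank hHM ((d k0)^2) L hLform
    have h2 : L.rank ≤ r - 1 := by
      have h3 : L.rank ≤ (Matrix.diagonal ev).rank := by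
        rw [hLdef]
        exact le_trans (Matrix.rank_mul_le_left _ _) (Matrix.rank_mul_le_right _ _)
      have h4 : (Matrix.diagonal ev).rank = (Finset.univ.filter (fun i => ev i ≠ 0)).card := by
        rw [Matrix.rank_diagonal, Fintype.card_subtype]
      have h5 : (Finset.univ.filter (fun i => ev i ≠ 0)).card ≤ r - 1 := by
        have hsub : Finset.univ.filter (fun i => ev i ≠ 0) ⊆ Finset.univ.erase k0 := by
          intro k hk
          rw [Finset.mem_filter] at hk
          rw [Finset.mem_erase]
          refine ⟨?_, Finset.mem_univ _⟩
          intro hkk0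
          apply hk.2
          rw [hkk0, hev]
          simp
        calc (Finset.univ.filter (fun i => ev i ≠ 0)).card ≤ (Finset.univ.erase k0).card :=
            Finset.card_le_card hsub
        _ = r - 1 := by
            rw [Finset.card_erase_of_mem (Finset.mem_univ _), Finset.card_univ, Fintype.card_fin]
      omega
    omega
  -- singular value facts
  have hsv0M : d k1 ≤ sval M 0 := by
    apply le_sval_of_count M 0
    obtain ⟨k, hk⟩ := hexistM
    have hmem : k ∈ Finset.univ.filter (fun k =>
        d k1 ≤ Real.sqrt ((Matrix.isHermitian_conjTranspose_mul_self M).eigenvalues k)) := by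
      rw [Finset.mem_filter]
      refine ⟨Finset.mem_univ _, ?_⟩
      have : hHM.eigenvalues k = d k1 * d k1 := hk
      rw [this]
      rw [show d k1 * d k1 = (d k1)^2 by ring, Real.sqrt_sq hdmaxpos.le]
    exact Finset.card_pos.mpr ⟨k, hmem⟩
  have hsvr_ge : d k0 ≤ sval M (r - 1) := by
    apply le_sval_of_count M (r - 1)
    rw [Nat.sub_add_cancel hr]
    apply le_trans hcountM
    apply Finset.card_le_card
    intro k hk
    rw [Finset.mem_filter] at hk ⊢
    refine ⟨Finset.mem_univ _, ?_⟩
    have h1 : (d k0)^2 ≤ hHM.eigenvalues k := hk.2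
    rw [Real.le_sqrt hdminpos.le (le_trans (sq_nonneg _) h1)]
    exact h1
  have hsvr_le : sval M (r - 1) ≤ d k0 := by
    apply sval_le_of_count M (r - 1) hdminpos.le
    apply le_trans _ hcountM_hi
    apply Finset.card_le_card
    intro k hk
    rw [Finset.mem_filter] at hk ⊢
    refine ⟨Finset.mem_univ _, ?_⟩
    have h1 : d k0 < Real.sqrt (hHM.eigenvalues k) := hk.2
    have := (Real.lt_sqrt hdminpos.le).mp h1
    exact this
  have hsv0M₀ : sval M₀ 0 ≤ Real.sqrt β := by
    apply sval_le_of_count M₀ 0 (Real.sqrt_nonneg β)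
    have : Finset.univ.filter (fun k =>
        Real.sqrt β < Real.sqrt ((Matrix.isHermitian_conjTranspose_mul_self M₀).eigenvalues k)) = ∅ := by
      apply Finset.filter_eq_empty_iff.mpr
      intro k _
      exact not_lt.mpr (Real.sqrt_le_sqrt (hμ₀_hi k))
    rw [this]
    simp
  have hsvr₀_ge : Real.sqrt α ≤ sval M₀ (r - 1) := by
    apply le_sval_of_count M₀ (r - 1)
    rw [Nat.sub_add_cancel hr]
    apply le_trans hcount₀
    apply Finset.card_le_card
    intro k hk
    rw [Finset.mem_filter] at hk ⊢
    exact ⟨Finset.mem_univ _, Real.sqrt_le_sqrt hk.2⟩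
  -- arithmetic
  set ρ := ((N₀ : ℝ) * (T₀ : ℝ)) / ((N : ℝ) * (T : ℝ)) with hρdef
  have hρpos : 0 < ρ := div_pos (mul_pos hN0r hT0r) (mul_pos hNr hTr)
  have hβρ : β = (C * d k1)^2 * ρ := by
    rw [hβdef, hCN, hCT, hρdef]
    field_simp
  have hαρ : α = (c * d k0)^2 * ρ := by
    rw [hαdef, hcN, hcT, hρdef]
    field_simp
  have hsqβ : Real.sqrt β = C * d k1 * Real.sqrt ρ := by
    rw [hβρ, Real.sqrt_mul (sq_nonneg _), Real.sqrt_sq (by positivity)]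
  have hsqα : Real.sqrt α = c * d k0 * Real.sqrt ρ := by
    rw [hαρ, Real.sqrt_mul (sq_nonneg _), Real.sqrt_sq (by positivity)]
  have hsqρpos : 0 < Real.sqrt ρ := Real.sqrt_pos.mpr hρpos
  have goal1 : sval M₀ 0 ≤ C * sval M 0 * Real.sqrt ρ := by
    calc sval M₀ 0 ≤ Real.sqrt β := hsv0M₀
    _ = C * d k1 * Real.sqrt ρ := hsqβ
    _ ≤ C * sval M 0 * Real.sqrt ρ := by
        apply mul_le_mul_of_nonneg_right _ hsqρpos.le
        exact mul_le_mul_of_nonneg_left hsv0M hCpos.le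
  have goal2 : c * sval M (r - 1) * Real.sqrt ρ ≤ sval M₀ (r - 1) := by
    calc c * sval M (r - 1) * Real.sqrt ρ ≤ c * d k0 * Real.sqrt ρ := by
          apply mul_le_mul_of_nonneg_right _ hsqρpos.le
          exact mul_le_mul_of_nonneg_left hsvr_le hc.le
    _ = Real.sqrt α := hsqα.symm
    _ ≤ sval M₀ (r - 1) := hsvr₀_ge
  have hsvrpos : 0 < sval M (r - 1) := lt_of_lt_of_le hdminpos hsvr_ge
  have hαpos : 0 < α := mul_pos (mul_pos hcNpos (pow_pos hdminpos 2)) hcTpos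
  have hsvr₀pos : 0 < sval M₀ (r - 1) := by
    have h := hsvr₀_ge
    have h2 : (0:ℝ) < Real.sqrt α := Real.sqrt_pos.mpr hαpos
    linarith
  have goal4 : sval M₀ 0 / sval M₀ (r - 1) ≤ (C / c) * (sval M 0 / sval M (r - 1)) := by
    have h1 : sval M₀ 0 / sval M₀ (r - 1) ≤
        (C * sval M 0 * Real.sqrt ρ) / (c * sval M (r - 1) * Real.sqrt ρ) := by
      exact div_le_div₀
        (mul_nonneg (mul_nonneg hCpos.le (le_trans hdmaxpos.le hsv0M)) (Real.sqrt_nonneg _))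
        goal1 (mul_pos (mul_pos hc hsvrpos) hsqρpos) goal2
    have h2 : (C * sval M 0 * Real.sqrt ρ) / (c * sval M (r - 1) * Real.sqrt ρ) =
        (C / c) * (sval M 0 / sval M (r - 1)) := by
      field_simp
    rw [h2] at h1
    exact h1
  exact ⟨goal1, goal2, hrankM₀, goal4⟩
end
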